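/- Let G be a torsion-free abelian group and let R = ⊕_{n∈G} R_n be a G-graded commutative ring. Then every idempotent element of R is contained in the base subring R₀, where 0 is the identity element of G. -/

import Mathlib

open DirectSum Finset TensorProduct

/-- Newton iteration: near-idempotents in a multiplicatively closed additive subgroup of a
commutative ring can be corrected to genuine idempotents. -/
lemma aux_newton {R : Type*} [CommRing R] (P : AddSubgroup R)
    (hmul : ∀ a b : R, a ∈ P → b ∈ P → a * b ∈ P) :
    ∀ (m : ℕ) (x : R), x ∈ P → (x ^ 2 - x) ^ m = 0 →
      ∃ f, f ∈ P ∧ IsIdempotentElem f ∧ IsNilpotent (x - f) := by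
  intro m
  induction m using Nat.strong_induction_on with
  | _ m ih =>
    rcases m with _ | m
    · intro x hx hm
      rw [pow_zero] at hm
      have hall : ∀ a : R, a = 0 := fun a => by
        calc a = a * 1 := (mul_one a).symm
        _ = a * 0 := by rw [hm]
        _ = 0 := mul_zero a
      exact ⟨x, hx, by unfold IsIdempotentElem; rw [hall (x*x), hall x], ⟨1, by rw [pow_one, sub_self]⟩⟩
    rcases m with _ | m
    · intro x hx hm
      rw [pow_one, sub_eq_zero, sq] at hm
      exact ⟨x, hx, hm, ⟨1, by rw [pow_one, sub_self]⟩⟩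
    · intro x hx hm
      have hx2 : x ^ 2 ∈ P := by rw [sq]; exact hmul x x hx hx
      have hx3 : x ^ 3 ∈ P := by rw [pow_succ]; exact hmul _ x hx2 hx
      set x' : R := 3 • x ^ 2 - 2 • x ^ 3 with hx'def
      have hx'P : x' ∈ P := AddSubgroup.sub_mem P (AddSubgroup.nsmul_mem P hx2 3)
        (AddSubgroup.nsmul_mem P hx3 2)
      have key : (x' ^ 2 - x') ^ (m + 1) = 0 := by
        have h1 : x' ^ 2 - x' = (x ^ 2 - x) ^ 2 * (4 * (x ^ 2 - x) - 3) := by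
          simp only [hx'def, nsmul_eq_mul]; push_cast; ring
        rw [h1, mul_pow, ← pow_mul]
        have h2 : (x ^ 2 - x) ^ (2 * (m + 1)) = 0 := by
          have h3 : 2 * (m + 1) = (m + 2) + m := by omega
          rw [h3, pow_add, hm, zero_mul]
        rw [h2, zero_mul]
      obtain ⟨f, h1, h2, h3⟩ := ih (m + 1) (by omega) x' hx'P key
      refine ⟨f, h1, h2, ?_⟩
      have hnx : IsNilpotent (x - x') := by
        have h4 : x - x' = (2 * x - 1) * (x ^ 2 - x) := by
          simp only [hx'def, nsmul_eq_mul]; push_cast; ring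
        rw [h4]
        exact (Commute.all _ _).isNilpotent_mul_left ⟨m + 2, hm⟩
      have h5 : x - f = (x - x') + (x' - f) := by ring
      rw [h5]
      exact (Commute.all _ _).isNilpotent_add hnx h3

/-- The `(i+i)`-th component of `f * f` is the square of the `i`-th component of `f`,
provided the only way to write `i + i` as a sum of two degrees in the support of `f`
is `i + i` itself. -/
lemma aux_proj_sq {ι : Type*} [AddCommMonoid ι] [DecidableEq ι] {R : Type*} [CommRing R]
    (𝒜 : ι → AddSubgroup R) [GradedRing 𝒜] (f : R) (i : ι)
    (H : ∀ j k : ι, (DirectSum.decompose 𝒜 f j : R) ≠ 0 → (DirectSum.decompose 𝒜 f k : R) ≠ 0 →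
      j + k = i + i → j = i ∧ k = i) :
    (DirectSum.decompose 𝒜 (f * f) (i + i) : R) =
      (DirectSum.decompose 𝒜 f i : R) * (DirectSum.decompose 𝒜 f i : R) := by
  classical
  set s := DFinsupp.support (DirectSum.decompose 𝒜 f) with hs
  have hre : f = ∑ j ∈ s, (DirectSum.decompose 𝒜 f j : R) :=
    (DirectSum.sum_support_decompose 𝒜 f).symm
  have key : ∀ j ∈ s, ∀ k ∈ s,
      GradedRing.proj 𝒜 (i + i) ((DirectSum.decompose 𝒜 f j : R) * (DirectSum.decompose 𝒜 f k : R))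
        = if j = i ∧ k = i then (DirectSum.decompose 𝒜 f i : R) * (DirectSum.decompose 𝒜 f i : R)
          else 0 := by
    intro j hj k hk
    have hmem : (DirectSum.decompose 𝒜 f j : R) * (DirectSum.decompose 𝒜 f k : R) ∈ 𝒜 (j + k) :=
      SetLike.mul_mem_graded (SetLike.coe_mem _) (SetLike.coe_mem _)
    have hj0 : (DirectSum.decompose 𝒜 f j : R) ≠ 0 := by
      simpa [ZeroMemClass.coe_eq_zero] using DFinsupp.mem_support_iff.mp hj
    have hk0 : (DirectSum.decompose 𝒜 f k : R) ≠ 0 := by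
      simpa [ZeroMemClass.coe_eq_zero] using DFinsupp.mem_support_iff.mp hk
    by_cases hjk : j + k = i + i
    · obtain ⟨hj', hk'⟩ := H j k hj0 hk0 hjk
      subst hj'; subst hk'
      rw [if_pos ⟨rfl, rfl⟩, GradedRing.proj_apply]
      exact DirectSum.decompose_of_mem_same 𝒜 hmem
    · rw [if_neg (fun h => hjk (by rw [h.1, h.2])), GradedRing.proj_apply]
      exact DirectSum.decompose_of_mem_ne 𝒜 hmem hjk
  have main : (DirectSum.decompose 𝒜 (f * f) (i + i) : R)
      = ∑ j ∈ s, ∑ k ∈ s, (if j = i ∧ k = i then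
          (DirectSum.decompose 𝒜 f i : R) * (DirectSum.decompose 𝒜 f i : R) else 0) := by
    rw [← GradedRing.proj_apply]
    conv_lhs => rw [hre, Finset.sum_mul_sum, map_sum]
    refine Finset.sum_congr rfl fun j hj => ?_
    rw [map_sum]
    exact Finset.sum_congr rfl fun k hk => key j hj k hk
  rw [main]
  by_cases his : i ∈ s
  · rw [Finset.sum_eq_single_of_mem i his (fun b _ hb => Finset.sum_eq_zero
      (fun k _ => if_neg (fun h => hb h.1)))]
    rw [Finset.sum_eq_single_of_mem i his (fun b _ hb => if_neg (fun h => hb h.2))]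
    simp
  · have hzero : (DirectSum.decompose 𝒜 f i : R) = 0 := by
      have := DFinsupp.notMem_support_iff.mp his
      rw [this]; rfl
    rw [hzero, zero_mul]
    refine Finset.sum_eq_zero fun j hj => Finset.sum_eq_zero fun k hk => ?_
    refine if_neg fun h => his ?_
    rwa [← h.1]


lemma aux_claim {ι : Type*} [AddCommMonoid ι] [LinearOrder ι] [IsOrderedCancelAddMonoid ι]
    {R : Type*} [CommRing R] (𝒜 : ι → AddSubgroup R) [GradedRing 𝒜]
    (e : R) (he : IsIdempotentElem e) :
    ∀ i : ι, 0 < i → (DirectSum.decompose 𝒜 e i : R) ∈ nilradical R := by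
  classical
  have hN : (nilradical R).IsHomogeneous 𝒜 := by
    rw [nilradical, Ideal.zero_eq_bot]
    exact (Ideal.IsHomogeneous.bot 𝒜).radical
  set s := DFinsupp.support (DirectSum.decompose 𝒜 e) with hs
  have core : ∀ i : ι, 0 < i →
      (∀ j, i < j → (DirectSum.decompose 𝒜 e j : R) ∈ nilradical R) →
      (DirectSum.decompose 𝒜 e i : R) ∈ nilradical R := by
    intro i hi hind
    set n : R := ∑ j ∈ s.filter (fun j => i < j), (DirectSum.decompose 𝒜 e j : R) with hn
    have hnN : n ∈ nilradical R :=
      Ideal.sum_mem _ fun j hj => hind j (Finset.mem_filter.mp hj).2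
    set f : R := ∑ j ∈ s.filter (fun j => ¬ i < j), (DirectSum.decompose 𝒜 e j : R) with hf
    have hef : f + n = e := by
      rw [hf, hn, Finset.sum_filter_not_add_sum_filter]
      exact DirectSum.sum_support_decompose 𝒜 e
    -- components of f
    have decf : ∀ m : ι, (DirectSum.decompose 𝒜 f m : R) =
        if m ∈ s.filter (fun j => ¬ i < j) then (DirectSum.decompose 𝒜 e m : R) else 0 := by
      intro m
      rw [← GradedRing.proj_apply, hf, map_sum]
      by_cases hm : m ∈ s.filter (fun j => ¬ i < j)
      · rw [if_pos hm]
        rw [Finset.sum_eq_single_of_mem m hm (fun b _ hb => by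
          rw [GradedRing.proj_apply]
          exact DirectSum.decompose_of_mem_ne 𝒜 (SetLike.coe_mem _) hb)]
        rw [GradedRing.proj_apply]
        exact DirectSum.decompose_of_mem_same 𝒜 (SetLike.coe_mem _)
      · rw [if_neg hm]
        refine Finset.sum_eq_zero fun b hb => ?_
        rw [GradedRing.proj_apply]
        exact DirectSum.decompose_of_mem_ne 𝒜 (SetLike.coe_mem _) (fun h => hm (h ▸ hb))
    -- f * f - f is in the nilradical
    have hffN : f * f - f ∈ nilradical R := by
      have heq : f * f - f = (1 - 2 * f - n) * n := by
        have he' : (f + n) * (f + n) = f + n := by rw [hef]; exact he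
        linear_combination he'
      rw [heq]
      exact Ideal.mul_mem_left _ _ hnN
    have hproj : (DirectSum.decompose 𝒜 (f * f - f) (i + i) : R) ∈ nilradical R := hN _ hffN
    have hii : i < i + i := lt_add_of_pos_left i hi
    have hfii : (DirectSum.decompose 𝒜 f (i + i) : R) = 0 := by
      rw [decf]
      refine if_neg fun h => ?_
      exact (Finset.mem_filter.mp h).2 hii
    have hsq : (DirectSum.decompose 𝒜 (f * f) (i + i) : R) =
        (DirectSum.decompose 𝒜 f i : R) * (DirectSum.decompose 𝒜 f i : R) := by
      refine aux_proj_sq 𝒜 f i fun j k hj hk hjk => ?_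
      have hj' : ¬ i < j := by
        by_contra hc
        have hjf : j ∉ s.filter (fun l => ¬ i < l) := fun hmem =>
          (Finset.mem_filter.mp hmem).2 hc
        rw [decf, if_neg hjf] at hj
        exact hj rfl
      have hk' : ¬ i < k := by
        by_contra hc
        have hkf : k ∉ s.filter (fun l => ¬ i < l) := fun hmem =>
          (Finset.mem_filter.mp hmem).2 hc
        rw [decf, if_neg hkf] at hk
        exact hk rfl
      have hji : j = i := by
        by_contra hne
        have : j < i := lt_of_le_of_ne (not_lt.mp hj') hne
        exact absurd hjk (ne_of_lt (add_lt_add_of_lt_of_le this (not_lt.mp hk')))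
      exact ⟨hji, by rwa [hji, add_right_inj] at hjk⟩
    have hfiN : (DirectSum.decompose 𝒜 f i : R) ∈ nilradical R := by
      have h2 : GradedRing.proj 𝒜 (i + i) (f * f) - GradedRing.proj 𝒜 (i + i) f
          ∈ nilradical R := by
        rw [← map_sub, GradedRing.proj_apply]
        exact hproj
      rw [GradedRing.proj_apply, GradedRing.proj_apply, hfii, sub_zero, hsq] at h2
      rw [mem_nilradical] at h2 ⊢
      obtain ⟨m, hm⟩ := h2
      exact ⟨2 * m, by rw [pow_mul, sq, hm]⟩
    by_cases his : i ∈ s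
    · rwa [decf, if_pos (Finset.mem_filter.mpr ⟨his, lt_irrefl i⟩)] at hfiN
    · have : DirectSum.decompose 𝒜 e i = 0 := DFinsupp.notMem_support_iff.mp his
      rw [this]
      exact (nilradical R).zero_mem
  -- strong induction on the number of support elements above `i`
  suffices H : ∀ (k : ℕ) (i : ι), ((s.filter (fun j => i < j)).card ≤ k) → 0 < i →
      (DirectSum.decompose 𝒜 e i : R) ∈ nilradical R by
    exact fun i hi => H _ i le_rfl hi
  intro k
  induction k with
  | zero =>
    intro i hc hi
    refine core i hi fun j hj => ?_
    have hjs : j ∉ s := by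
      intro hjs
      have : j ∈ s.filter (fun j => i < j) := Finset.mem_filter.mpr ⟨hjs, hj⟩
      rw [Finset.card_eq_zero.mp (Nat.le_zero.mp hc)] at this
      exact absurd this (Finset.notMem_empty j)
    rw [DFinsupp.notMem_support_iff.mp hjs]
    exact (nilradical R).zero_mem
  | succ k ih =>
    intro i hc hi
    refine core i hi fun j hj => ?_
    by_cases hjs : j ∈ s
    · refine ih j ?_ (lt_trans hi hj)
      have hsub : s.filter (fun l => j < l) ⊆ (s.filter (fun l => i < l)).erase j := by
        intro x hx
        obtain ⟨hxs, hxj⟩ := Finset.mem_filter.mp hx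
        exact Finset.mem_erase.mpr ⟨(ne_of_gt hxj), Finset.mem_filter.mpr ⟨hxs, lt_trans hj hxj⟩⟩
      have hjmem : j ∈ s.filter (fun l => i < l) := Finset.mem_filter.mpr ⟨hjs, hj⟩
      have := Finset.card_le_card hsub
      rw [Finset.card_erase_of_mem hjmem] at this
      omega
    · rw [DFinsupp.notMem_support_iff.mp hjs]
      exact (nilradical R).zero_mem

lemma aux_claim_neg {ι : Type*} [AddCommMonoid ι] [LinearOrder ι] [IsOrderedCancelAddMonoid ι]
    {R : Type*} [CommRing R] (𝒜 : ι → AddSubgroup R) [GradedRing 𝒜]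
    (e : R) (he : IsIdempotentElem e) :
    ∀ i : ι, i < 0 → (DirectSum.decompose 𝒜 e i : R) ∈ nilradical R := by
  classical
  have hN : (nilradical R).IsHomogeneous 𝒜 := by
    rw [nilradical, Ideal.zero_eq_bot]
    exact (Ideal.IsHomogeneous.bot 𝒜).radical
  set s := DFinsupp.support (DirectSum.decompose 𝒜 e) with hs
  have core : ∀ i : ι, i < 0 →
      (∀ j, j < i → (DirectSum.decompose 𝒜 e j : R) ∈ nilradical R) →
      (DirectSum.decompose 𝒜 e i : R) ∈ nilradical R := by
    intro i hi hind
    set n : R := ∑ j ∈ s.filter (fun j => j < i), (DirectSum.decompose 𝒜 e j : R) with hn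
    have hnN : n ∈ nilradical R :=
      Ideal.sum_mem _ fun j hj => hind j (Finset.mem_filter.mp hj).2
    set f : R := ∑ j ∈ s.filter (fun j => ¬ j < i), (DirectSum.decompose 𝒜 e j : R) with hf
    have hef : f + n = e := by
      rw [hf, hn, Finset.sum_filter_not_add_sum_filter]
      exact DirectSum.sum_support_decompose 𝒜 e
    have decf : ∀ m : ι, (DirectSum.decompose 𝒜 f m : R) =
        if m ∈ s.filter (fun j => ¬ j < i) then (DirectSum.decompose 𝒜 e m : R) else 0 := by
      intro m
      rw [← GradedRing.proj_apply, hf, map_sum]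
      by_cases hm : m ∈ s.filter (fun j => ¬ j < i)
      · rw [if_pos hm]
        rw [Finset.sum_eq_single_of_mem m hm (fun b _ hb => by
          rw [GradedRing.proj_apply]
          exact DirectSum.decompose_of_mem_ne 𝒜 (SetLike.coe_mem _) hb)]
        rw [GradedRing.proj_apply]
        exact DirectSum.decompose_of_mem_same 𝒜 (SetLike.coe_mem _)
      · rw [if_neg hm]
        refine Finset.sum_eq_zero fun b hb => ?_
        rw [GradedRing.proj_apply]
        exact DirectSum.decompose_of_mem_ne 𝒜 (SetLike.coe_mem _) (fun h => hm (h ▸ hb))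
    have hffN : f * f - f ∈ nilradical R := by
      have heq : f * f - f = (1 - 2 * f - n) * n := by
        have he' : (f + n) * (f + n) = f + n := by rw [hef]; exact he
        linear_combination he'
      rw [heq]
      exact Ideal.mul_mem_left _ _ hnN
    have hproj : (DirectSum.decompose 𝒜 (f * f - f) (i + i) : R) ∈ nilradical R := hN _ hffN
    have hii : i + i < i := by
      have := add_lt_add_right hi i
      rwa [add_zero] at this
    have hfii : (DirectSum.decompose 𝒜 f (i + i) : R) = 0 := by
      rw [decf]
      refine if_neg fun h => ?_
      exact (Finset.mem_filter.mp h).2 hii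
    have hsq : (DirectSum.decompose 𝒜 (f * f) (i + i) : R) =
        (DirectSum.decompose 𝒜 f i : R) * (DirectSum.decompose 𝒜 f i : R) := by
      refine aux_proj_sq 𝒜 f i fun j k hj hk hjk => ?_
      have hj' : ¬ j < i := by
        by_contra hc
        have hjf : j ∉ s.filter (fun l => ¬ l < i) := fun hmem =>
          (Finset.mem_filter.mp hmem).2 hc
        rw [decf, if_neg hjf] at hj
        exact hj rfl
      have hk' : ¬ k < i := by
        by_contra hc
        have hkf : k ∉ s.filter (fun l => ¬ l < i) := fun hmem =>
          (Finset.mem_filter.mp hmem).2 hc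
        rw [decf, if_neg hkf] at hk
        exact hk rfl
      have hji : j = i := by
        by_contra hne
        have : i < j := lt_of_le_of_ne (not_lt.mp hj') (Ne.symm hne)
        exact absurd hjk (ne_of_gt (add_lt_add_of_lt_of_le this (not_lt.mp hk')))
      exact ⟨hji, by rwa [hji, add_right_inj] at hjk⟩
    have hfiN : (DirectSum.decompose 𝒜 f i : R) ∈ nilradical R := by
      have h2 : GradedRing.proj 𝒜 (i + i) (f * f) - GradedRing.proj 𝒜 (i + i) f
          ∈ nilradical R := by
        rw [← map_sub, GradedRing.proj_apply]
        exact hproj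
      rw [GradedRing.proj_apply, GradedRing.proj_apply, hfii, sub_zero, hsq] at h2
      rw [mem_nilradical] at h2 ⊢
      obtain ⟨m, hm⟩ := h2
      exact ⟨2 * m, by rw [pow_mul, sq, hm]⟩
    by_cases his : i ∈ s
    · rwa [decf, if_pos (Finset.mem_filter.mpr ⟨his, lt_irrefl i⟩)] at hfiN
    · have : DirectSum.decompose 𝒜 e i = 0 := DFinsupp.notMem_support_iff.mp his
      rw [this]
      exact (nilradical R).zero_mem
  suffices H : ∀ (k : ℕ) (i : ι), ((s.filter (fun j => j < i)).card ≤ k) → i < 0 →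
      (DirectSum.decompose 𝒜 e i : R) ∈ nilradical R by
    exact fun i hi => H _ i le_rfl hi
  intro k
  induction k with
  | zero =>
    intro i hc hi
    refine core i hi fun j hj => ?_
    have hjs : j ∉ s := by
      intro hjs
      have : j ∈ s.filter (fun l => l < i) := Finset.mem_filter.mpr ⟨hjs, hj⟩
      rw [Finset.card_eq_zero.mp (Nat.le_zero.mp hc)] at this
      exact absurd this (Finset.notMem_empty j)
    rw [DFinsupp.notMem_support_iff.mp hjs]
    exact (nilradical R).zero_mem
  | succ k ih =>
    intro i hc hi
    refine core i hi fun j hj => ?_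
    by_cases hjs : j ∈ s
    · refine ih j ?_ (lt_trans hj hi)
      have hsub : s.filter (fun l => l < j) ⊆ (s.filter (fun l => l < i)).erase j := by
        intro x hx
        obtain ⟨hxs, hxj⟩ := Finset.mem_filter.mp hx
        exact Finset.mem_erase.mpr ⟨ne_of_lt hxj, Finset.mem_filter.mpr ⟨hxs, lt_trans hxj hj⟩⟩
      have hjmem : j ∈ s.filter (fun l => l < i) := Finset.mem_filter.mpr ⟨hjs, hj⟩
      have := Finset.card_le_card hsub
      rw [Finset.card_erase_of_mem hjmem] at this
      omega
    · rw [DFinsupp.notMem_support_iff.mp hjs]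
      exact (nilradical R).zero_mem

theorem aux_ordered {ι : Type*} [AddCommGroup ι] [LinearOrder ι] [IsOrderedAddMonoid ι]
    {R : Type*} [CommRing R] (𝒜 : ι → AddSubgroup R) [GradedRing 𝒜]
    (e : R) (he : IsIdempotentElem e) : e ∈ 𝒜 0 := by
  classical
  have hpos := aux_claim 𝒜 e he
  have hneg := aux_claim_neg 𝒜 e he
  set s := DFinsupp.support (DirectSum.decompose 𝒜 e) with hs
  set n : R := ∑ j ∈ s.filter (fun j => j ≠ 0), (DirectSum.decompose 𝒜 e j : R) with hn
  have hnN : n ∈ nilradical R := Ideal.sum_mem _ fun j hj => by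
    rcases lt_or_gt_of_ne (Finset.mem_filter.mp hj).2 with h | h
    · exact hneg j h
    · exact hpos j h
  have hnNil : IsNilpotent n := mem_nilradical.mp hnN
  have hx : e - n = ∑ j ∈ s.filter (fun j => ¬ j ≠ 0), (DirectSum.decompose 𝒜 e j : R) := by
    have h1 : (∑ j ∈ s.filter (fun j => ¬ j ≠ 0), (DirectSum.decompose 𝒜 e j : R)) + n = e := by
      rw [hn, Finset.sum_filter_not_add_sum_filter]
      exact DirectSum.sum_support_decompose 𝒜 e
    exact sub_eq_iff_eq_add.mpr h1.symm
  have hxP : e - n ∈ 𝒜 0 := by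
    rw [hx]
    refine AddSubgroup.sum_mem _ fun j hj => ?_
    have hj0 : j = 0 := not_not.mp (Finset.mem_filter.mp hj).2
    exact hj0 ▸ SetLike.coe_mem _
  have hmul : ∀ a b : R, a ∈ 𝒜 0 → b ∈ 𝒜 0 → a * b ∈ 𝒜 0 := fun a b ha hb => by
    have := SetLike.mul_mem_graded ha hb
    rwa [zero_add] at this
  obtain ⟨m, hm⟩ : IsNilpotent ((e - n) ^ 2 - (e - n)) := by
    have he' : e * e = e := he
    have heq : (e - n) ^ 2 - (e - n) = n * (n + 1 - 2 * e) := by linear_combination he'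
    rw [heq]
    exact (Commute.all _ _).isNilpotent_mul_right hnNil
  obtain ⟨f, hfP, hff, hfx⟩ := aux_newton (𝒜 0) hmul m (e - n) hxP hm
  have hefnil : IsNilpotent (e - f) := by
    have h5 : e - f = n + ((e - n) - f) := by ring
    rw [h5]
    exact (Commute.all _ _).isNilpotent_add hnNil hfx
  have hd3 : (e - f) * (1 - (e - f) * (e - f)) = 0 := by
    have hf' : f * f = f := hff
    have he' : e * e = e := he
    linear_combination (3 * f - e - 1) * he' + (f + 1 - 3 * e) * hf'
  have hsqnil : IsNilpotent ((e - f) * (e - f)) := (Commute.all _ _).isNilpotent_mul_left hefnil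
  have hu : IsUnit (1 - (e - f) * (e - f)) := hsqnil.isUnit_one_sub
  have h0 : e - f = 0 := (IsUnit.mul_left_eq_zero hu).mp hd3
  have hef : e = f := sub_eq_zero.mp h0
  rw [hef]
  exact hfP

/-- Every idempotent element of a `G`-graded commutative ring with `G` a torsion-free abelian
group is contained in the base subring `R₀`. -/
theorem idempotent_mem_degree_zero
    {G : Type*} [AddCommGroup G] [DecidableEq G]
    (hG : ∀ (n : ℕ) (x : G), n ≠ 0 → n • x = 0 → x = 0)
    {R : Type*} [CommRing R] (𝒜 : G → AddSubgroup R) [GradedRing 𝒜]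
    (e : R) (he : IsIdempotentElem e) :
    e ∈ 𝒜 0 := by
  classical
  -- the rationalization of `G`
  set V := ℚ ⊗[ℤ] G with hV
  set j : G →ₗ[ℤ] V := TensorProduct.mk ℤ ℚ G 1 with hj
  haveI : IsLocalizedModule (nonZeroDivisors ℤ) j :=
    (isLocalizedModule_iff_isBaseChange (nonZeroDivisors ℤ) ℚ j).mpr
      (TensorProduct.isBaseChange ℤ G ℚ)
  have hjinj : Function.Injective j := by
    intro a c h
    obtain ⟨u, hu⟩ := IsLocalizedModule.exists_of_eq (S := nonZeroDivisors ℤ) (f := j) h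
    have h1 : (u : ℤ) • (a - c) = 0 := by
      rw [smul_sub]
      rw [Submonoid.smul_def, Submonoid.smul_def] at hu
      rw [hu, sub_self]
    have hu0 : (u : ℤ) ≠ 0 := nonZeroDivisors.coe_ne_zero u
    have h2 : (u : ℤ).natAbs • (a - c) = 0 := by
      rcases Int.natAbs_eq (u : ℤ) with hcase | hcase
      · have : ((u : ℤ).natAbs : ℤ) • (a - c) = 0 := by rw [← hcase]; exact h1
        rwa [natCast_zsmul] at this
      · have : ((u : ℤ).natAbs : ℤ) • (a - c) = 0 := by
          have hneg : ((u : ℤ).natAbs : ℤ) = -(u : ℤ) := by omega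
          rw [hneg, neg_smul, h1, neg_zero]
        rwa [natCast_zsmul] at this
    have := hG (u : ℤ).natAbs (a - c) (Int.natAbs_ne_zero.mpr hu0) h2
    exact sub_eq_zero.mp this
  -- choose a basis of `V` over `ℚ` and a well-order on the index type
  let κ := Module.Free.ChooseBasisIndex ℚ V
  let b : Module.Basis κ ℚ V := Module.Free.chooseBasis ℚ V
  letI : LinearOrder κ := IsWellOrder.linearOrder WellOrderingRel
  -- the composite injective additive map to a linearly ordered abelian group
  let F : G →+ Lex (κ →₀ ℚ) := AddMonoidHom.mk' (fun g => toLex (b.repr (j g)))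
    (fun a c => show toLex (b.repr (j (a + c))) = toLex (b.repr (j a)) + toLex (b.repr (j c)) by
      rw [map_add, map_add]; rfl)
  have hFinj : Function.Injective F := by
    intro a c h
    exact hjinj (b.repr.injective (toLex.injective h))
  -- linearly order `G`
  letI lin : LinearOrder G :=
    { le := fun a c => F a ≤ F c
      lt := fun a c => F a < F c
      le_refl := fun a => show F a ≤ F a from le_refl (F a)
      le_trans := fun a b c (h1 : F a ≤ F b) (h2 : F b ≤ F c) =>
        show F a ≤ F c from le_trans h1 h2
      le_antisymm := fun a b (h1 : F a ≤ F b) (h2 : F b ≤ F a) =>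
        hFinj (le_antisymm h1 h2)
      le_total := fun a b => le_total (F a) (F b)
      lt_iff_le_not_ge := fun a b =>
        show F a < F b ↔ F a ≤ F b ∧ ¬F b ≤ F a from lt_iff_le_not_ge
      toDecidableLE := fun a b => inferInstanceAs (Decidable (F a ≤ F b))
      toDecidableEq := ‹DecidableEq G›
      toDecidableLT := fun a b => inferInstanceAs (Decidable (F a < F b)) }
  haveI : IsOrderedAddMonoid G :=
    { add_le_add_left := fun a c h d => by
        have h' : F a ≤ F c := h
        show F (a + d) ≤ F (c + d)
        rw [map_add, map_add]
        exact add_le_add h' le_rfl }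
  exact aux_ordered 𝒜 e he
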